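/- Suppose K : {(t,s) : t > s} × ℝⁿ × ℝⁿ → ℝ satisfies the semigroup identity K(t,x,s,y) = ∫ K(t,x,r,z) K(r,z,s,y) dz for all s < r < t (with K nonnegative, or the bound applied to operator norms of matrix-valued K), and the short-time Gaussian bound K(t,x,s,y) ≤ C(π/κ)^{n/2} Φ((t−s)/(4κ), x−y) whenever 0 < t−s ≤ R_c². Then for all t > s, K(t,x,s,y) ≤ C (t−s)^{-n/2} exp(−κ|x−y|²/(t−s) + γ(t−s)/R_c²), where γ = log(C(π/κ)^{n/2}). -/

import Mathlib

open MeasureTheory Real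
open scoped RealInnerProductSpace

section Aux

variable {V : Type*} [NormedAddCommGroup V] [InnerProductSpace ℝ V]
  [FiniteDimensional ℝ V] [MeasurableSpace V] [BorelSpace V]

omit [FiniteDimensional ℝ V] [MeasurableSpace V] [BorelSpace V] in
lemma aux_cast (p : ℝ) (w v : V) :
    (-(p:ℂ) * (‖v‖:ℂ) ^ 2 + 1 * ((⟪w, v⟫ : ℝ) : ℂ)) = ((-p * ‖v‖ ^ 2 + ⟪w, v⟫ : ℝ) : ℂ) := by
  push_cast; ring

lemma aux_integrable_rexp {p : ℝ} (hp : 0 < p) (w : V) :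
    Integrable (fun v : V ↦ rexp (-p * ‖v‖ ^ 2 + ⟪w, v⟫)) := by
  have h := (GaussianFourier.integrable_cexp_neg_mul_sq_norm_add
    (V := V) (b := (p : ℂ)) (by simpa using hp) 1 w).re
  apply h.congr
  filter_upwards with v
  simp only [RCLike.re_to_complex, aux_cast p w v, Complex.exp_ofReal_re]

lemma aux_integral_rexp {p : ℝ} (hp : 0 < p) (w : V) :
    ∫ v : V, rexp (-p * ‖v‖ ^ 2 + ⟪w, v⟫) =
      (π / p) ^ ((Module.finrank ℝ V : ℝ) / 2) * rexp (‖w‖ ^ 2 / (4 * p)) := by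
  rw [← Complex.ofReal_inj]
  have h := GaussianFourier.integral_cexp_neg_mul_sq_norm_add
    (V := V) (b := (p : ℂ)) (by simpa using hp) 1 w
  calc ((∫ v : V, rexp (-p * ‖v‖ ^ 2 + ⟪w, v⟫) : ℝ) : ℂ)
      = ∫ v : V, ((rexp (-p * ‖v‖ ^ 2 + ⟪w, v⟫) : ℝ) : ℂ) := integral_ofReal.symm
    _ = ∫ v : V, Complex.exp (-(p:ℂ) * (‖v‖:ℂ) ^ 2 + 1 * ((⟪w, v⟫ : ℝ) : ℂ)) := by
        congr 1; funext v
        rw [aux_cast p w v, Complex.ofReal_exp]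
    _ = ((π:ℂ) / p) ^ ((Module.finrank ℝ V : ℂ) / 2) *
          Complex.exp (1 ^ 2 * (‖w‖:ℂ) ^ 2 / (4 * p)) := h
    _ = (((π / p) ^ ((Module.finrank ℝ V : ℝ) / 2) * rexp (‖w‖ ^ 2 / (4 * p)) : ℝ) : ℂ) := by
        rw [Complex.ofReal_mul, Complex.ofReal_cpow (by positivity), Complex.ofReal_exp]
        norm_num

omit [FiniteDimensional ℝ V] [MeasurableSpace V] [BorelSpace V] in
lemma aux_complete_sq (a b : ℝ) (x y z : V) :
    rexp (-(a * ‖x - z‖ ^ 2)) * rexp (-(b * ‖z - y‖ ^ 2)) =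
      rexp (-(a * ‖x‖ ^ 2) - b * ‖y‖ ^ 2) *
        rexp (-(a + b) * ‖z‖ ^ 2 + ⟪(2 * a) • x + (2 * b) • y, z⟫) := by
  rw [← Real.exp_add, ← Real.exp_add]
  congr 1
  have h1 : ‖x - z‖ ^ 2 = ‖x‖ ^ 2 - 2 * ⟪x, z⟫ + ‖z‖ ^ 2 := norm_sub_sq_real x z
  have h2 : ‖z - y‖ ^ 2 = ‖z‖ ^ 2 - 2 * ⟪z, y⟫ + ‖y‖ ^ 2 := norm_sub_sq_real z y
  have h3 : ⟪(2 * a) • x + (2 * b) • y, z⟫ = (2 * a) * ⟪x, z⟫ + (2 * b) * ⟪y, z⟫ := by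
    rw [inner_add_left, real_inner_smul_left, real_inner_smul_left]
  have h4 : ⟪z, y⟫ = ⟪y, z⟫ := real_inner_comm y z
  rw [h1, h2, h3, h4]; ring

lemma aux_gauss_integrable {a b : ℝ} (ha : 0 < a) (hb : 0 < b) (x y : V) :
    Integrable (fun z : V ↦ rexp (-(a * ‖x - z‖ ^ 2)) * rexp (-(b * ‖z - y‖ ^ 2))) := by
  have := (aux_integrable_rexp (V := V) (show 0 < a + b by positivity)
    ((2 * a) • x + (2 * b) • y)).const_mul (rexp (-(a * ‖x‖ ^ 2) - b * ‖y‖ ^ 2))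
  exact this.congr (by filter_upwards with z using (aux_complete_sq a b x y z).symm)

lemma aux_gauss_conv {a b : ℝ} (ha : 0 < a) (hb : 0 < b) (x y : V) :
    ∫ z : V, rexp (-(a * ‖x - z‖ ^ 2)) * rexp (-(b * ‖z - y‖ ^ 2)) =
      (π / (a + b)) ^ ((Module.finrank ℝ V : ℝ) / 2) *
        rexp (-(a * b / (a + b) * ‖x - y‖ ^ 2)) := by
  simp_rw [aux_complete_sq a b x y]
  rw [integral_const_mul, aux_integral_rexp (show 0 < a + b by positivity)]
  have hw : ‖(2 * a) • x + (2 * b) • y‖ ^ 2 =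
      (2 * a) ^ 2 * ‖x‖ ^ 2 + 2 * ((2 * a) * (2 * b) * ⟪x, y⟫) + (2 * b) ^ 2 * ‖y‖ ^ 2 := by
    rw [norm_add_sq_real, norm_smul, norm_smul, real_inner_smul_left, real_inner_smul_right]
    simp [mul_pow, sq_abs]; ring
  have hxy : ‖x - y‖ ^ 2 = ‖x‖ ^ 2 - 2 * ⟪x, y⟫ + ‖y‖ ^ 2 := norm_sub_sq_real x y
  rw [← mul_assoc, mul_comm (rexp _), mul_assoc, ← Real.exp_add]
  congr 2
  rw [hw, hxy]
  have hab : a + b ≠ 0 := by positivity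
  field_simp
  ring

end Aux

lemma aux_rpow3 {u v z : ℝ} (hu : 0 < u) (hv : 0 < v) (hz : 0 < z) (e : ℝ) :
    u ^ (-e) * v ^ (-e) * (u * v / z) ^ e = z ^ (-e) := by
  rw [Real.rpow_neg hu.le, Real.rpow_neg hv.le, Real.rpow_neg hz.le,
      Real.div_rpow (by positivity) hz.le, Real.mul_rpow hu.le hv.le]
  have h1 : u ^ e ≠ 0 := by positivity
  have h2 : v ^ e ≠ 0 := by positivity
  have h3 : z ^ e ≠ 0 := by positivity
  field_simp

lemma aux_iter (n : ℕ) (A κ Rc : ℝ) (hA : 0 < A) (hκ : 0 < κ) (hRc : 0 < Rc)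
    (K : ℝ → EuclideanSpace ℝ (Fin n) → ℝ → EuclideanSpace ℝ (Fin n) → ℝ)
    (hnn : ∀ t x s y, 0 ≤ K t x s y)
    (hsemi : ∀ s r t : ℝ, s < r → r < t → ∀ x y,
      K t x s y = ∫ z, K t x r z * K r z s y)
    (hbase : ∀ s t : ℝ, s < t → t - s ≤ Rc ^ 2 → ∀ x y,
      K t x s y ≤ A * (π * (t - s) / κ) ^ (-((n:ℝ)/2)) *
        rexp (-(κ * ‖x - y‖ ^ 2 / (t - s)))) :
    ∀ m : ℕ, ∀ h : ℝ, 0 < h → h ≤ Rc ^ 2 → ∀ s x y,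
      K (s + ((m:ℝ) + 1) * h) x s y ≤
        A ^ (m + 1) * (π * (((m:ℝ) + 1) * h) / κ) ^ (-((n:ℝ)/2)) *
          rexp (-(κ * ‖x - y‖ ^ 2 / (((m:ℝ) + 1) * h))) := by
  intro m
  induction m with
  | zero =>
    intro h hh0 hhRc s x y
    have := hbase s (s + h) (by linarith) (by rw [show s + h - s = h by ring]; exact hhRc) x y
    rw [show s + h - s = h by ring] at this
    simpa using this
  | succ m ih =>
    intro h hh0 hhRc s x y
    push_cast
    have hm0 : (0:ℝ) ≤ (m:ℝ) := Nat.cast_nonneg m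
    have hM : (0:ℝ) < (m:ℝ) + 1 := by positivity
    have ha : 0 < κ / (((m:ℝ) + 1) * h) := by positivity
    have hb : 0 < κ / h := by positivity
    have hsr : s < s + h := by linarith
    have hrt : s + h < s + ((m:ℝ) + 1 + 1) * h := by nlinarith
    rw [hsemi s (s + h) (s + ((m:ℝ) + 1 + 1) * h) hsr hrt x y]
    set a := κ / (((m:ℝ) + 1) * h) with hadef
    set b := κ / h with hbdef
    set c1 := A ^ (m + 1) * (π * (((m:ℝ) + 1) * h) / κ) ^ (-((n:ℝ)/2)) with hc1
    set c2 := A * (π * h / κ) ^ (-((n:ℝ)/2)) with hc2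
    have hc1p : 0 < c1 := by rw [hc1]; positivity
    have hc2p : 0 < c2 := by rw [hc2]; positivity
    have hpt : ∀ z, K (s + ((m:ℝ) + 1 + 1) * h) x (s + h) z * K (s + h) z s y ≤
        (c1 * c2) * (rexp (-(a * ‖x - z‖ ^ 2)) * rexp (-(b * ‖z - y‖ ^ 2))) := by
      intro z
      have h1 := ih h hh0 hhRc (s + h) x z
      rw [show (s + h) + ((m:ℝ) + 1) * h = s + ((m:ℝ) + 1 + 1) * h by ring] at h1
      have h1' : K (s + ((m:ℝ) + 1 + 1) * h) x (s + h) z ≤ c1 * rexp (-(a * ‖x - z‖ ^ 2)) := by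
        refine h1.trans_eq ?_
        rw [hc1, hadef]
        congr 2
        ring
      have h2 := hbase s (s + h) hsr (by rw [show s + h - s = h by ring]; exact hhRc) z y
      rw [show s + h - s = h by ring] at h2
      have h2' : K (s + h) z s y ≤ c2 * rexp (-(b * ‖z - y‖ ^ 2)) := by
        refine h2.trans_eq ?_
        rw [hc2, hbdef]
        congr 2
        ring
      calc K (s + ((m:ℝ) + 1 + 1) * h) x (s + h) z * K (s + h) z s y
          ≤ (c1 * rexp (-(a * ‖x - z‖ ^ 2))) * (c2 * rexp (-(b * ‖z - y‖ ^ 2))) := by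
            apply mul_le_mul h1' h2' (hnn _ _ _ _) (by positivity)
        _ = (c1 * c2) * (rexp (-(a * ‖x - z‖ ^ 2)) * rexp (-(b * ‖z - y‖ ^ 2))) := by ring
    have hint : (∫ z, K (s + ((m:ℝ) + 1 + 1) * h) x (s + h) z * K (s + h) z s y) ≤
        ∫ z, (c1 * c2) * (rexp (-(a * ‖x - z‖ ^ 2)) * rexp (-(b * ‖z - y‖ ^ 2))) := by
      apply integral_mono_of_nonneg
      · exact ae_of_all _ fun z ↦ mul_nonneg (hnn _ _ _ _) (hnn _ _ _ _)
      · exact (aux_gauss_integrable ha hb x y).const_mul _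
      · exact ae_of_all _ hpt
    refine hint.trans_eq ?_
    rw [integral_const_mul, aux_gauss_conv ha hb x y, finrank_euclideanSpace_fin]
    have habs : a * b / (a + b) = κ / (((m:ℝ) + 1 + 1) * h) := by
      rw [hadef, hbdef]
      have h1 : ((m:ℝ) + 1) * h ≠ 0 := by positivity
      have h2 : h ≠ 0 := by positivity
      field_simp
      ring
    have hpow : π / (a + b) =
        (π * (((m:ℝ) + 1) * h) / κ) * (π * h / κ) / (π * (((m:ℝ) + 1 + 1) * h) / κ) := by
      rw [hadef, hbdef]
      have h1 : ((m:ℝ) + 1) * h ≠ 0 := by positivity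
      have h2 : h ≠ 0 := by positivity
      field_simp
      ring
    rw [habs, hpow, hc1, hc2]
    have hrp := aux_rpow3 (show (0:ℝ) < π * (((m:ℝ) + 1) * h) / κ by positivity)
      (show (0:ℝ) < π * h / κ by positivity)
      (show (0:ℝ) < π * (((m:ℝ) + 1 + 1) * h) / κ by positivity) ((n:ℝ)/2)
    calc A ^ (m + 1) * (π * (((m:ℝ) + 1) * h) / κ) ^ (-((n:ℝ)/2)) *
          (A * (π * h / κ) ^ (-((n:ℝ)/2))) *
          (((π * (((m:ℝ) + 1) * h) / κ) * (π * h / κ) / (π * (((m:ℝ) + 1 + 1) * h) / κ))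
              ^ ((n:ℝ)/2 : ℝ) *
          rexp (-(κ / (((m:ℝ) + 1 + 1) * h) * ‖x - y‖ ^ 2)))
        = A ^ (m + 1 + 1) *
          ((π * (((m:ℝ) + 1) * h) / κ) ^ (-((n:ℝ)/2)) * (π * h / κ) ^ (-((n:ℝ)/2)) *
            ((π * (((m:ℝ) + 1) * h) / κ) * (π * h / κ) / (π * (((m:ℝ) + 1 + 1) * h) / κ))
              ^ ((n:ℝ)/2 : ℝ)) *
          rexp (-(κ / (((m:ℝ) + 1 + 1) * h) * ‖x - y‖ ^ 2)) := by ring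
      _ = A ^ (m + 1 + 1) * (π * (((m:ℝ) + 1 + 1) * h) / κ) ^ (-((n:ℝ)/2)) *
          rexp (-(κ * ‖x - y‖ ^ 2 / (((m:ℝ) + 1 + 1) * h))) := by
            rw [hrp]
            congr 2
            ring


theorem stmt_5 (n : ℕ) (C κ Rc : ℝ) (hC : 0 < C) (hκ : 0 < κ) (hRc : 0 < Rc)
    (K : ℝ → EuclideanSpace ℝ (Fin n) → ℝ → EuclideanSpace ℝ (Fin n) → ℝ)
    (hnn : ∀ t x s y, 0 ≤ K t x s y)
    (hsemi : ∀ s r t : ℝ, s < r → r < t → ∀ x y,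
      K t x s y = ∫ z, K t x r z * K r z s y)
    (hshort : ∀ s t : ℝ, s < t → t - s ≤ Rc ^ 2 → ∀ x y,
      K t x s y ≤ C * (Real.pi / κ) ^ ((n : ℝ) / 2) *
        ((4 * Real.pi * ((t - s) / (4 * κ))) ^ (-(n : ℝ) / 2) *
          Real.exp (-‖x - y‖ ^ 2 / (4 * ((t - s) / (4 * κ)))))) :
    ∀ s t : ℝ, s < t → ∀ x y,
      K t x s y ≤ C * (t - s) ^ (-(n : ℝ) / 2) *
        Real.exp (-κ * ‖x - y‖ ^ 2 / (t - s)
          + Real.log (C * (Real.pi / κ) ^ ((n : ℝ) / 2)) * (t - s) / Rc ^ 2) := by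
  intro s t hst x y
  have hπ : 0 < π := Real.pi_pos
  set A : ℝ := C * (π / κ) ^ ((n:ℝ)/2) with hAdef
  have hA : 0 < A := by rw [hAdef]; positivity
  have hbase : ∀ s t : ℝ, s < t → t - s ≤ Rc ^ 2 → ∀ x y,
      K t x s y ≤ A * (π * (t - s) / κ) ^ (-((n:ℝ)/2)) *
        rexp (-(κ * ‖x - y‖ ^ 2 / (t - s))) := by
    intro s t hst hle x y
    have hts : (0:ℝ) < t - s := sub_pos.mpr hst
    have hh := hshort s t hst hle x y
    rw [show 4 * π * ((t - s) / (4 * κ)) = π * (t - s) / κ by field_simp,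
        show -‖x - y‖ ^ 2 / (4 * ((t - s) / (4 * κ))) = -(κ * ‖x - y‖ ^ 2 / (t - s)) by
          field_simp,
        show -(n:ℝ)/2 = -((n:ℝ)/2) from neg_div 2 (n:ℝ)] at hh
    calc K t x s y ≤ A * ((π * (t - s) / κ) ^ (-((n:ℝ)/2)) *
          rexp (-(κ * ‖x - y‖ ^ 2 / (t - s)))) := hh
      _ = A * (π * (t - s) / κ) ^ (-((n:ℝ)/2)) * rexp (-(κ * ‖x - y‖ ^ 2 / (t - s))) := by
          ring
  have hd : 0 < t - s := sub_pos.mpr hst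
  set u : ℝ := (t - s) / Rc ^ 2 with hudef
  have hu0 : 0 ≤ u := by rw [hudef]; positivity
  set γ : ℝ := Real.log A with hγ
  obtain ⟨m, hm1, hm2⟩ : ∃ m : ℕ, u ≤ (m:ℝ) + 1 ∧ (m:ℝ) * γ ≤ u * γ := by
    rcases le_or_gt 0 γ with hγ0 | hγ0
    · exact ⟨⌊u⌋₊, (Nat.lt_floor_add_one u).le,
        mul_le_mul_of_nonneg_right (Nat.floor_le hu0) hγ0⟩
    · refine ⟨⌊u⌋₊ + 1, ?_, ?_⟩
      · push_cast
        have := Nat.lt_floor_add_one u; linarith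
      · have hum : u ≤ ((⌊u⌋₊ + 1 : ℕ):ℝ) := by push_cast; exact (Nat.lt_floor_add_one u).le
        exact mul_le_mul_of_nonpos_right hum hγ0.le
  set h : ℝ := (t - s) / ((m:ℝ) + 1) with hhdef
  have hM : (0:ℝ) < (m:ℝ) + 1 := by positivity
  have hh0 : 0 < h := by rw [hhdef]; positivity
  have hhRc : h ≤ Rc ^ 2 := by
    rw [hhdef, div_le_iff₀ hM]
    have h2 := hm1
    rw [hudef, div_le_iff₀ (by positivity : (0:ℝ) < Rc ^ 2)] at h2
    linarith
  have hmh : ((m:ℝ) + 1) * h = t - s := by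
    rw [hhdef]; field_simp
  have hiter := aux_iter n A κ Rc hA hκ hRc K hnn hsemi hbase m h hh0 hhRc s x y
  rw [hmh, show s + (t - s) = t by ring] at hiter
  refine hiter.trans ?_
  have hApow : A ^ (m + 1) = rexp (((m:ℝ) + 1) * γ) := by
    have hc : (((m + 1 : ℕ)):ℝ) * γ = ((m:ℝ) + 1) * γ := by push_cast; ring
    rw [← hc, Real.exp_nat_mul, hγ, Real.exp_log hA]
  have hsplit : (π * (t - s) / κ) ^ (-((n:ℝ)/2)) =
      (π / κ) ^ (-((n:ℝ)/2)) * (t - s) ^ (-((n:ℝ)/2)) := by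
    rw [show π * (t - s) / κ = (π / κ) * (t - s) by ring,
      Real.mul_rpow (by positivity) hd.le]
  rw [hApow, hsplit]
  have key : rexp (((m:ℝ) + 1) * γ) * (π / κ) ^ (-((n:ℝ)/2)) ≤
      C * rexp (γ * (t - s) / Rc ^ 2) := by
    have hCA : C = A * (π / κ) ^ (-((n:ℝ)/2)) := by
      rw [hAdef, mul_assoc, ← Real.rpow_add (by positivity),
        show (n:ℝ)/2 + -((n:ℝ)/2) = 0 by ring, Real.rpow_zero, mul_one]
    have h2 : rexp (((m:ℝ) + 1) * γ) ≤ A * rexp (γ * (t - s) / Rc ^ 2) := by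
      rw [show A = rexp γ from (Real.exp_log hA).symm, ← Real.exp_add]
      apply Real.exp_le_exp.mpr
      have hg : γ * (t - s) / Rc ^ 2 = u * γ := by rw [hudef]; ring
      rw [hg]
      linarith
    calc rexp (((m:ℝ) + 1) * γ) * (π / κ) ^ (-((n:ℝ)/2))
        ≤ (A * rexp (γ * (t - s) / Rc ^ 2)) * (π / κ) ^ (-((n:ℝ)/2)) :=
          mul_le_mul_of_nonneg_right h2 (by positivity)
      _ = (A * (π / κ) ^ (-((n:ℝ)/2))) * rexp (γ * (t - s) / Rc ^ 2) := by ring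
      _ = C * rexp (γ * (t - s) / Rc ^ 2) := by rw [← hCA]
  have hRHSexp : rexp (-κ * ‖x - y‖ ^ 2 / (t - s) + γ * (t - s) / Rc ^ 2) =
      rexp (-(κ * ‖x - y‖ ^ 2 / (t - s))) * rexp (γ * (t - s) / Rc ^ 2) := by
    rw [← Real.exp_add]; congr 1; ring
  calc rexp (((m:ℝ) + 1) * γ) * ((π / κ) ^ (-((n:ℝ)/2)) * (t - s) ^ (-((n:ℝ)/2))) *
        rexp (-(κ * ‖x - y‖ ^ 2 / (t - s)))
      = (rexp (((m:ℝ) + 1) * γ) * (π / κ) ^ (-((n:ℝ)/2))) *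
          ((t - s) ^ (-((n:ℝ)/2)) * rexp (-(κ * ‖x - y‖ ^ 2 / (t - s)))) := by ring
    _ ≤ (C * rexp (γ * (t - s) / Rc ^ 2)) *
          ((t - s) ^ (-((n:ℝ)/2)) * rexp (-(κ * ‖x - y‖ ^ 2 / (t - s)))) :=
        mul_le_mul_of_nonneg_right key (by positivity)
    _ = C * (t - s) ^ (-(n:ℝ)/2) *
          rexp (-κ * ‖x - y‖ ^ 2 / (t - s) + γ * (t - s) / Rc ^ 2) := by
        rw [hRHSexp, show -(n:ℝ)/2 = -((n:ℝ)/2) from neg_div 2 (n:ℝ)]; ring
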